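/- Let d ≥ 2, m > 6 and i, j ∈ ℤ^d with ‖i − j‖_∞ ≥ 5. Then for every ℓ₁ ∈ A(K_i^m) ∩ ℤ^d and every ℓ₂ ∈ A(K_j^m) ∩ ℤ^d, the discrete balls B_{ℓ₁}(m/6) and B_{ℓ₂}(m/6) are disjoint. -/

import Mathlib

open MeasureTheory
open scoped ENNReal NNReal

noncomputable section

/-- The level-`m` cube `K_i^m` in `ℝ^d`:
`K_i^m = {x : |x^(l) - m·i^(l)| ≤ m/2 for all l}`. -/
def cube (d : ℕ) (m : ℝ) (i : Fin d → ℤ) : Set (EuclideanSpace ℝ (Fin d)) :=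
  {x | ∀ l, |x l - m * (i l : ℝ)| ≤ m / 2}

/-- The distance `ρ(A,B) = inf {|x - y| : x ∈ A, y ∈ B}` between two sets. -/
def rho (d : ℕ) (A B : Set (EuclideanSpace ℝ (Fin d))) : ℝ :=
  sInf (Set.image2 dist A B)

/-- The discrete ball `B_i(r)`: the union of the level-1 cubes `K_j^1` with
`ρ(K_i^1, K_j^1) ≤ r` (and `B_i(0) = ∅`). -/
def dball (d : ℕ) (i : Fin d → ℤ) (r : ℝ) : Set (EuclideanSpace ℝ (Fin d)) :=
  if 0 < r then
    ⋃ j ∈ {j : Fin d → ℤ | rho d (cube d 1 i) (cube d 1 j) ≤ r}, cube d 1 j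
  else ∅

/-- `π_d`, the Lebesgue volume of the unit Euclidean ball in `ℝ^d`. -/
def unitBallVol (d : ℕ) : ℝ :=
  (volume (Metric.ball (0 : EuclideanSpace ℝ (Fin d)) 1)).toReal

/-- `β_d = ⌈3 + 2√d · π_d^(1/d)⌉`. -/
def betaD (d : ℕ) : ℝ :=
  (⌈3 + 2 * Real.sqrt d * (unitBallVol d) ^ ((1 : ℝ) / d)⌉ : ℤ)

/-- The embedding of `ℤ^d` into `ℝ^d`. -/
def embedZ (d : ℕ) (i : Fin d → ℤ) : EuclideanSpace ℝ (Fin d) :=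
  WithLp.toLp 2 (fun l => (i l : ℝ))

/-- `A(K_j^m)`: the union of `K_j^m` with its `3^d - 1` neighbouring level-`m`
cubes, i.e. the cubes `K_i^m` with `‖i - j‖_∞ ≤ 1`. -/
def nbhd (d : ℕ) (m : ℝ) (j : Fin d → ℤ) : Set (EuclideanSpace ℝ (Fin d)) :=
  ⋃ i ∈ {i : Fin d → ℤ | ‖i - j‖ ≤ 1}, cube d m i

/-- The radius `R_i(ζ) = inf {r > 0 : Σ_{j : ρ(K_j^1,K_i^1) ≤ β_d r} ζ(j) ≤ π_d r^d}`
if `ζ i > 0` (with `inf ∅ = +∞`, so the value is taken in `ℝ≥0∞`), and `R_i(ζ) = 0`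
if `ζ i = 0`. -/
def Rad (d : ℕ) (ζ : (Fin d → ℤ) → ℕ) (i : Fin d → ℤ) : ℝ≥0∞ :=
  if ζ i = 0 then 0
  else sInf {t : ℝ≥0∞ | ∃ r : ℝ, 0 < r ∧ t = ENNReal.ofReal r ∧
    ((∑ᶠ j ∈ {j : Fin d → ℤ |
        rho d (cube d 1 j) (cube d 1 i) ≤ betaD d * r}, ζ j : ℕ) : ℝ)
      ≤ unitBallVol d * r ^ d}

/-- The sup norm `‖x‖_∞` on `ℝ^d`. -/
def supNorm (d : ℕ) (x : EuclideanSpace ℝ (Fin d)) : ℝ := ⨆ l, |x l|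

lemma coord_le_dist (d : ℕ) (x y : EuclideanSpace ℝ (Fin d)) (l : Fin d) :
    |x l - y l| ≤ dist x y := by
  rw [EuclideanSpace.dist_eq]
  have h1 : |x l - y l| = Real.sqrt (dist (x l) (y l) ^ 2) := by
    rw [Real.sqrt_sq_eq_abs, Real.dist_eq, abs_abs]
  rw [h1]
  apply Real.sqrt_le_sqrt
  exact Finset.single_le_sum (f := fun i => dist (x i) (y i) ^ 2)
    (fun i _ => sq_nonneg _) (Finset.mem_univ l)

lemma embedZ_mem_cube (d : ℕ) (a : Fin d → ℤ) : embedZ d a ∈ cube d 1 a := by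
  intro l
  simp [embedZ]

lemma rho_ge (d : ℕ) (a b : Fin d → ℤ) (l : Fin d) :
    |(a l : ℝ) - (b l : ℝ)| - 1 ≤ rho d (cube d 1 a) (cube d 1 b) := by
  apply le_csInf
  · exact ⟨_, Set.mem_image2_of_mem (embedZ_mem_cube d a) (embedZ_mem_cube d b)⟩
  · rintro z ⟨x, hx, y, hy, rfl⟩
    have hxa : |x l - (a l : ℝ)| ≤ 1 / 2 := by simpa using hx l
    have hyb : |y l - (b l : ℝ)| ≤ 1 / 2 := by simpa using hy l
    have hxy : |x l - y l| ≤ dist x y := coord_le_dist d x y l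
    have t1 : |(a l : ℝ) - (b l : ℝ)| ≤ |(a l : ℝ) - x l| + |x l - (b l : ℝ)| :=
      abs_sub_le _ _ _
    have t2 : |x l - (b l : ℝ)| ≤ |x l - y l| + |y l - (b l : ℝ)| := abs_sub_le _ _ _
    have t3 : |(a l : ℝ) - x l| = |x l - (a l : ℝ)| := abs_sub_comm _ _
    linarith

/-- Let `d ≥ 2`, `m > 6` and `i, j ∈ ℤ^d` with `‖i − j‖_∞ ≥ 5`.
Then for every `ℓ₁ ∈ A(K_i^m) ∩ ℤ^d` and every `ℓ₂ ∈ A(K_j^m) ∩ ℤ^d`, the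
discrete balls `B_{ℓ₁}(m/6)` and `B_{ℓ₂}(m/6)` are disjoint. -/
theorem statement10 (d : ℕ) (hd : 2 ≤ d) (m : ℝ) (hm : 6 < m)
    (i j : Fin d → ℤ) (hij : 5 ≤ ‖i - j‖)
    (ℓ₁ ℓ₂ : Fin d → ℤ)
    (h1 : embedZ d ℓ₁ ∈ nbhd d m i) (h2 : embedZ d ℓ₂ ∈ nbhd d m j) :
    Disjoint (dball d ℓ₁ (m / 6)) (dball d ℓ₂ (m / 6)) := by
  have hm0 : (0 : ℝ) < m := by linarith
  -- pick a coordinate where i and j differ a lot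
  have hexists : ∃ l, 4 < ‖(i - j) l‖ := by
    by_contra h
    push_neg at h
    have : ‖i - j‖ ≤ 4 := (pi_norm_le_iff_of_nonneg (by norm_num)).2 h
    linarith
  obtain ⟨l, hl⟩ := hexists
  have hl' : 4 < |(i l : ℝ) - (j l : ℝ)| := by
    have : ‖(i - j) l‖ = |((i l - j l : ℤ) : ℝ)| := by
      simp [Int.norm_eq_abs]
    rw [this] at hl
    push_cast at hl
    exact hl
  -- unfold nbhd memberships
  simp only [nbhd, Set.mem_iUnion, Set.mem_setOf_eq] at h1 h2
  obtain ⟨i', hi', hc1⟩ := h1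
  obtain ⟨j', hj', hc2⟩ := h2
  have hi'l : |(i' l : ℝ) - (i l : ℝ)| ≤ 1 := by
    have := norm_le_pi_norm (i' - i) l
    have h2 : ‖(i' - i) l‖ = |((i' l - i l : ℤ) : ℝ)| := by simp [Int.norm_eq_abs]
    rw [h2] at this
    push_cast at this
    linarith
  have hj'l : |(j' l : ℝ) - (j l : ℝ)| ≤ 1 := by
    have := norm_le_pi_norm (j' - j) l
    have h2 : ‖(j' - j) l‖ = |((j' l - j l : ℤ) : ℝ)| := by simp [Int.norm_eq_abs]
    rw [h2] at this
    push_cast at this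
    linarith
  have key1 : |(ℓ₁ l : ℝ) - m * (i l : ℝ)| ≤ 3 * m / 2 := by
    have hcube := hc1 l
    simp only [embedZ] at hcube
    have t1 : |(ℓ₁ l : ℝ) - m * (i l : ℝ)| ≤
        |(ℓ₁ l : ℝ) - m * (i' l : ℝ)| + |m * (i' l : ℝ) - m * (i l : ℝ)| :=
      abs_sub_le _ _ _
    have t2 : |m * (i' l : ℝ) - m * (i l : ℝ)| = m * |(i' l : ℝ) - (i l : ℝ)| := by
      rw [← mul_sub, abs_mul, abs_of_pos hm0]
    nlinarith [abs_nonneg ((i' l : ℝ) - (i l : ℝ))]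
  have key2 : |(ℓ₂ l : ℝ) - m * (j l : ℝ)| ≤ 3 * m / 2 := by
    have hcube := hc2 l
    simp only [embedZ] at hcube
    have t1 : |(ℓ₂ l : ℝ) - m * (j l : ℝ)| ≤
        |(ℓ₂ l : ℝ) - m * (j' l : ℝ)| + |m * (j' l : ℝ) - m * (j l : ℝ)| :=
      abs_sub_le _ _ _
    have t2 : |m * (j' l : ℝ) - m * (j l : ℝ)| = m * |(j' l : ℝ) - (j l : ℝ)| := by
      rw [← mul_sub, abs_mul, abs_of_pos hm0]
    nlinarith [abs_nonneg ((j' l : ℝ) - (j l : ℝ))]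
  rw [Set.disjoint_left]
  intro x hx1 hx2
  have h6 : 0 < m / 6 := by linarith
  rw [dball, if_pos h6] at hx1
  rw [dball, if_pos h6] at hx2
  simp only [Set.mem_iUnion, Set.mem_setOf_eq] at hx1 hx2
  obtain ⟨a, ha, hxa⟩ := hx1
  obtain ⟨b, hb, hxb⟩ := hx2
  -- bound |x l - ℓ₁ l| and |x l - ℓ₂ l|
  have hbd1 : |x l - (ℓ₁ l : ℝ)| ≤ m / 6 + 3 / 2 := by
    have hr := rho_ge d ℓ₁ a l
    have hxal : |x l - (a l : ℝ)| ≤ 1 / 2 := by simpa using hxa l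
    have t1 : |x l - (ℓ₁ l : ℝ)| ≤ |x l - (a l : ℝ)| + |(a l : ℝ) - (ℓ₁ l : ℝ)| :=
      abs_sub_le _ _ _
    have t2 : |(a l : ℝ) - (ℓ₁ l : ℝ)| = |(ℓ₁ l : ℝ) - (a l : ℝ)| := abs_sub_comm _ _
    linarith
  have hbd2 : |x l - (ℓ₂ l : ℝ)| ≤ m / 6 + 3 / 2 := by
    have hr := rho_ge d ℓ₂ b l
    have hxbl : |x l - (b l : ℝ)| ≤ 1 / 2 := by simpa using hxb l
    have t1 : |x l - (ℓ₂ l : ℝ)| ≤ |x l - (b l : ℝ)| + |(b l : ℝ) - (ℓ₂ l : ℝ)| :=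
      abs_sub_le _ _ _
    have t2 : |(b l : ℝ) - (ℓ₂ l : ℝ)| = |(ℓ₂ l : ℝ) - (b l : ℝ)| := abs_sub_comm _ _
    linarith
  -- derive contradiction
  have habs1 := abs_le.mp key1
  have habs2 := abs_le.mp key2
  have habs3 := abs_le.mp hbd1
  have habs4 := abs_le.mp hbd2
  rcases lt_abs.mp hl' with h | h
  · nlinarith
  · nlinarith
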